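/- There is an absolute constant c > 0 such that the following holds. Let P ⊆ ℝ^d be a finite nonempty set, let ε ∈ (0,1), and let q ∈ ℝ^d be any point. Then there exist k ≤ c/ε² points p_1, …, p_k ∈ P and nonnegative coefficients α_1, …, α_k summing to 1 such that ‖q − Σ_{i=1}^k α_i p_i‖ ≤ dist(q, conv(P)) + ε·diam(P). -/

import Mathlib

open Metric

local notation "⟪" x ", " y "⟫" => @inner ℝ _ _ x y

/-- Selection lemma: for any `x`, there is `p ∈ P` with
`‖x* - x‖² ≤ ⟪x* - x, p - x⟫`, where `x* ∈ convexHull ℝ P`. -/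
lemma sparse_select {d : ℕ} (P : Finset (EuclideanSpace ℝ (Fin d))) (hP : P.Nonempty)
    (xs : EuclideanSpace ℝ (Fin d)) (hxs : xs ∈ convexHull ℝ (↑P : Set (EuclideanSpace ℝ (Fin d))))
    (x : EuclideanSpace ℝ (Fin d)) :
    ∃ p ∈ P, ‖xs - x‖ ^ 2 ≤ ⟪xs - x, p - x⟫ := by
  set v := xs - x with hv
  have hlin : IsLinearMap ℝ (fun y : EuclideanSpace ℝ (Fin d) => ⟪v, y⟫) :=
    ⟨fun a b => inner_add_right v a b, fun c a => real_inner_smul_right v a c⟩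
  obtain ⟨p, hpP, hpmax⟩ := Finset.exists_mem_eq_sup' (α := ℝ) hP (fun p => ⟪v, p⟫)
  refine ⟨p, hpP, ?_⟩
  have hsub : (↑P : Set (EuclideanSpace ℝ (Fin d))) ⊆
      {y | ⟪v, y⟫ ≤ P.sup' hP (fun p => ⟪v, p⟫)} := by
    intro y hy
    have hy' : y ∈ P := hy
    exact Finset.le_sup' (fun p => (⟪v, p⟫ : ℝ)) hy'
  have hconv : convexHull ℝ (↑P : Set (EuclideanSpace ℝ (Fin d))) ⊆
      {y | ⟪v, y⟫ ≤ P.sup' hP (fun p => ⟪v, p⟫)} :=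
    convexHull_min hsub (convex_halfSpace_le hlin _)
  have hxs' : ⟪v, xs⟫ ≤ P.sup' hP (fun p => ⟪v, p⟫) := hconv hxs
  rw [hpmax] at hxs'
  have h1 : ⟪v, p - x⟫ = ⟪v, p⟫ - ⟪v, x⟫ := inner_sub_right v p x
  have h2 : ⟪v, xs - x⟫ = ⟪v, xs⟫ - ⟪v, x⟫ := inner_sub_right v xs x
  have h3 : ⟪v, v⟫ = ‖v‖ ^ 2 := real_inner_self_eq_norm_sq v
  rw [← hv] at h2
  linarith

set_option maxHeartbeats 1000000 in
/-- Frank–Wolfe style induction: a uniform convex combination of `k+1` points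
of `P` approximates `xs` with squared error `D²/(k+1)`. -/
lemma sparse_induction {d : ℕ} (P : Finset (EuclideanSpace ℝ (Fin d))) (hP : P.Nonempty)
    (xs : EuclideanSpace ℝ (Fin d)) (hxs : xs ∈ convexHull ℝ (↑P : Set (EuclideanSpace ℝ (Fin d))))
    (k : ℕ) :
    ∃ p : Fin (k + 1) → EuclideanSpace ℝ (Fin d), (∀ i, p i ∈ P) ∧
      ‖((k : ℝ) + 1)⁻¹ • (∑ i, p i) - xs‖ ^ 2 ≤
        Metric.diam (↑P : Set (EuclideanSpace ℝ (Fin d))) ^ 2 / ((k : ℝ) + 1) := by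
  set D := Metric.diam (↑P : Set (EuclideanSpace ℝ (Fin d))) with hD
  have hbdd : Bornology.IsBounded (convexHull ℝ (↑P : Set (EuclideanSpace ℝ (Fin d)))) :=
    (P.finite_toSet.isCompact_convexHull (𝕜 := ℝ)).isBounded
  have hdistD : ∀ p ∈ P, ‖p - xs‖ ≤ D := by
    intro p hp
    have hp' : p ∈ convexHull ℝ (↑P : Set (EuclideanSpace ℝ (Fin d))) :=
      subset_convexHull ℝ _ hp
    have := Metric.dist_le_diam_of_mem hbdd hp' hxs
    rw [convexHull_diam] at this
    simpa [dist_eq_norm] using this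
  have hD0 : 0 ≤ D := Metric.diam_nonneg
  induction k with
  | zero =>
      obtain ⟨p0, hp0⟩ := hP
      refine ⟨fun _ => p0, fun _ => hp0, ?_⟩
      have h1 : ‖p0 - xs‖ ≤ D := hdistD p0 hp0
      have h2 : (0:ℝ) ≤ ‖p0 - xs‖ := norm_nonneg _
      have hs : (∑ _i : Fin (0 + 1), p0) = p0 := by simp
      rw [hs]
      simp only [Nat.cast_zero, zero_add, inv_one, one_smul, div_one]
      nlinarith
  | succ k ih =>
      obtain ⟨p, hpP, hperr⟩ := ih
      set x := ((k : ℝ) + 1)⁻¹ • (∑ i, p i) with hx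
      obtain ⟨pn, hpnP, hpn⟩ := sparse_select P hP xs hxs x
      refine ⟨Fin.snoc p pn, ?_, ?_⟩
      · intro i
        refine Fin.lastCases ?_ (fun j => ?_) i
        · simpa using hpnP
        · simpa using hpP j
      · have hk2 : ((k : ℝ) + 1 + 1) ≠ 0 := by positivity
        have hk1 : ((k : ℝ) + 1) ≠ 0 := by positivity
        set γ : ℝ := ((k : ℝ) + 1 + 1)⁻¹ with hγ
        have hsum : (∑ i : Fin (k + 1 + 1), Fin.snoc p pn i) = (∑ i, p i) + pn := by
          rw [Fin.sum_univ_castSucc]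
          simp
        have hrepr : ((k : ℝ) + 1 + 1)⁻¹ • (∑ i : Fin (k + 1 + 1), Fin.snoc p pn i) - xs
            = (1 - γ) • (x - xs) + γ • (pn - xs) := by
          rw [hsum, hx, hγ]
          match_scalars <;> field_simp <;> ring
        push_cast
        rw [hrepr]
        have hnormsq := norm_add_sq_real ((1 - γ) • (x - xs)) (γ • (pn - xs))
        rw [hnormsq]
        have hγpos : 0 < γ := by rw [hγ]; positivity
        have hγlt : γ ≤ 1 := by
          rw [hγ]
          rw [inv_le_one_iff₀]
          right; linarith [Nat.cast_nonneg (α := ℝ) k]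
        have hinner : ⟪(1 - γ) • (x - xs), γ • (pn - xs)⟫
            = (1 - γ) * γ * ⟪x - xs, pn - xs⟫ := by
          rw [real_inner_smul_left, real_inner_smul_right]; ring
        have hcross : ⟪x - xs, pn - xs⟫ ≤ 0 := by
          have h1 : ⟪xs - x, pn - x⟫ = - ⟪x - xs, pn - x⟫ := by
            rw [show xs - x = -(x - xs) by abel, inner_neg_left]
          have h2 : ⟪x - xs, pn - xs⟫ = ⟪x - xs, pn - x⟫ + ⟪x - xs, x - xs⟫ := by
            rw [← inner_add_right]
            congr 1
            abel
          have h3 : ⟪x - xs, x - xs⟫ = ‖x - xs‖ ^ 2 := real_inner_self_eq_norm_sq _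
          have h4 : ‖xs - x‖ = ‖x - xs‖ := norm_sub_rev _ _
          rw [h4] at hpn
          linarith
        have hpnD : ‖pn - xs‖ ≤ D := hdistD pn hpnP
        have hpn0 : (0:ℝ) ≤ ‖pn - xs‖ := norm_nonneg _
        have hnsm1 : ‖(1 - γ) • (x - xs)‖ ^ 2 = (1 - γ)^2 * ‖x - xs‖ ^ 2 := by
          rw [norm_smul]
          simp [abs_of_nonneg (by linarith : (0:ℝ) ≤ 1 - γ), mul_pow]
        have hnsm2 : ‖γ • (pn - xs)‖ ^ 2 = γ^2 * ‖pn - xs‖ ^ 2 := by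
          rw [norm_smul]
          simp [abs_of_nonneg hγpos.le, mul_pow]
        rw [hnsm1, hnsm2, hinner]
        have hγval : γ * ((k : ℝ) + 1 + 1) = 1 := by
          rw [hγ]; field_simp
        have herr : ‖x - xs‖ ^ 2 ≤ D ^ 2 / ((k : ℝ) + 1) := hperr
        have hx0 : (0:ℝ) ≤ ‖x - xs‖ ^ 2 := by positivity
        have key : (1 - γ)^2 * ‖x - xs‖ ^ 2 + 2 * ((1 - γ) * γ * ⟪x - xs, pn - xs⟫)
            + γ^2 * ‖pn - xs‖ ^ 2 ≤ D ^ 2 / ((k : ℝ) + 1 + 1) := by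
          have h1 : (1 - γ)^2 * ‖x - xs‖ ^ 2 + 2 * ((1 - γ) * γ * ⟪x - xs, pn - xs⟫)
              + γ^2 * ‖pn - xs‖ ^ 2 ≤ (1 - γ)^2 * (D^2 / ((k:ℝ)+1)) + γ^2 * D^2 := by
            have hA : (1 - γ)^2 * ‖x - xs‖ ^ 2 ≤ (1 - γ)^2 * (D^2 / ((k:ℝ)+1)) :=
              mul_le_mul_of_nonneg_left herr (by positivity)
            have hB : γ^2 * ‖pn - xs‖ ^ 2 ≤ γ^2 * D^2 := by
              apply mul_le_mul_of_nonneg_left _ (by positivity)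
              nlinarith
            have hC : 2 * ((1 - γ) * γ * ⟪x - xs, pn - xs⟫) ≤ 0 := by
              apply mul_nonpos_of_nonneg_of_nonpos (by norm_num)
              exact mul_nonpos_of_nonneg_of_nonpos (by nlinarith) hcross
            linarith
          have h2 : (1 - γ)^2 * (D^2 / ((k:ℝ)+1)) + γ^2 * D^2 = D ^ 2 / ((k : ℝ) + 1 + 1) := by
            rw [hγ]
            field_simp
            ring
          linarith
        exact key

theorem sparse_approx_dist_to_convexHull :
    ∃ c : ℝ, 0 < c ∧
      ∀ (d : ℕ) (P : Finset (EuclideanSpace ℝ (Fin d))), P.Nonempty →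
        ∀ ε : ℝ, ε ∈ Set.Ioo (0 : ℝ) 1 →
          ∀ q : EuclideanSpace ℝ (Fin d),
            ∃ (k : ℕ) (p : Fin k → EuclideanSpace ℝ (Fin d)) (α : Fin k → ℝ),
              (k : ℝ) ≤ c / ε ^ 2 ∧
              (∀ i, p i ∈ P) ∧
              (∀ i, 0 ≤ α i) ∧
              (∑ i, α i) = 1 ∧
              ‖q - ∑ i, α i • p i‖ ≤
                Metric.infDist q (convexHull ℝ (↑P : Set (EuclideanSpace ℝ (Fin d))))
                  + ε * Metric.diam (↑P : Set (EuclideanSpace ℝ (Fin d))) := by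
  refine ⟨2, by norm_num, ?_⟩
  intro d P hP ε hε q
  obtain ⟨hε0, hε1⟩ := hε
  set D := Metric.diam (↑P : Set (EuclideanSpace ℝ (Fin d))) with hD
  have hD0 : 0 ≤ D := Metric.diam_nonneg
  -- closest point in convex hull
  have hcpt : IsCompact (convexHull ℝ (↑P : Set (EuclideanSpace ℝ (Fin d)))) :=
    P.finite_toSet.isCompact_convexHull (𝕜 := ℝ)
  have hne : (convexHull ℝ (↑P : Set (EuclideanSpace ℝ (Fin d)))).Nonempty := by
    obtain ⟨p0, hp0⟩ := hP
    exact ⟨p0, subset_convexHull ℝ _ (by exact_mod_cast hp0)⟩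
  obtain ⟨xs, hxsmem, hxsdist⟩ := hcpt.exists_infDist_eq_dist hne q
  -- choose number of points
  set n : ℕ := ⌈ε⁻¹ ^ 2⌉₊ with hn
  have hinv : ε⁻¹ * ε = 1 := inv_mul_cancel₀ hε0.ne'
  have hinvpos : 0 < ε⁻¹ := by positivity
  have hinv1 : 1 ≤ ε⁻¹ := by nlinarith
  have hεinv1 : (1:ℝ) ≤ ε⁻¹ ^ 2 := by nlinarith
  have hn1 : 1 ≤ n := by
    rw [hn]
    exact_mod_cast Nat.one_le_ceil_iff.mpr (by linarith)
  obtain ⟨m, hm⟩ : ∃ m, n = m + 1 := ⟨n - 1, (Nat.succ_pred_eq_of_pos hn1).symm⟩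
  obtain ⟨p, hpP, hperr⟩ := sparse_induction P hP xs hxsmem m
  have hmn : ((m : ℝ) + 1) = (n : ℝ) := by rw [hm]; push_cast; ring
  refine ⟨n, fun i => p (Fin.cast hm i), fun _ => ((n : ℝ))⁻¹, ?_, ?_, ?_, ?_, ?_⟩
  · -- n ≤ 2 / ε²
    have h1 : (n : ℝ) ≤ ε⁻¹ ^ 2 + 1 := by
      rw [hn]
      exact (Nat.ceil_lt_add_one (by positivity)).le
    have h2 : ε⁻¹ ^ 2 = 1 / ε ^ 2 := by rw [inv_pow]; ring
    rw [h2] at h1 hεinv1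
    have hε2 : (0:ℝ) < ε ^ 2 := by positivity
    have hid : (1 / ε ^ 2) * ε ^ 2 = 1 := by field_simp
    have hε2le : ε ^ 2 ≤ 1 := by nlinarith
    rw [le_div_iff₀ hε2]
    nlinarith [mul_le_mul_of_nonneg_right h1 hε2.le]
  · intro i
    exact hpP _
  · intro i
    positivity
  · rw [Finset.sum_const, Finset.card_univ, Fintype.card_fin, nsmul_eq_mul]
    field_simp
  · -- error bound
    have hsum : (∑ i : Fin n, ((n:ℝ))⁻¹ • p (Fin.cast hm i))
        = ((m : ℝ) + 1)⁻¹ • (∑ i, p i) := by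
      rw [← Finset.smul_sum, hmn]
      congr 1
      exact Fintype.sum_equiv (finCongr hm) _ _ (fun i => rfl)
    rw [hsum]
    set x := ((m : ℝ) + 1)⁻¹ • (∑ i, p i) with hx
    have hnε : ε⁻¹ ^ 2 ≤ (n : ℝ) := by rw [hn]; exact Nat.le_ceil _
    have hxerr : ‖x - xs‖ ^ 2 ≤ ε ^ 2 * D ^ 2 := by
      have h1 : D ^ 2 / ((m : ℝ) + 1) ≤ ε ^ 2 * D ^ 2 := by
        rw [hmn, div_le_iff₀ (by exact_mod_cast hn1 : (0:ℝ) < (n:ℝ))]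
        have h2 : ε⁻¹ ^ 2 * (ε ^ 2 * D ^ 2) = D ^ 2 := by
          rw [inv_pow]
          field_simp
        nlinarith [sq_nonneg D, sq_nonneg ε, mul_le_mul_of_nonneg_left hnε
          (by positivity : (0:ℝ) ≤ ε ^ 2 * D ^ 2)]
      linarith [hperr]
    have hxerr' : ‖x - xs‖ ≤ ε * D := by
      nlinarith [norm_nonneg (x - xs), mul_nonneg hε0.le hD0]
    calc ‖q - x‖ ≤ ‖q - xs‖ + ‖xs - x‖ := by
          rw [show q - x = (q - xs) + (xs - x) by abel]
          exact norm_add_le _ _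
      _ ≤ Metric.infDist q (convexHull ℝ (↑P : Set (EuclideanSpace ℝ (Fin d)))) + ε * D := by
          rw [norm_sub_rev xs x]
          have : ‖q - xs‖ = dist q xs := by rw [dist_eq_norm]
          rw [this, ← hxsdist]
          linarith
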